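/- Consider the quiver Q with 6 vertices H_1, H_2 (top), E_1, E_2 (middle), P_1, P_2 (bottom), arrows E_i → H_j and P_i → E_j for all i, j ∈ {1,2}, and relations identifying all paths with the same endpoints. Let C be the representation with R at every vertex and identity on every arrow (R a PID). Then the sequence 0 → C → I_{H_1} ⊕ I_{H_2} → I_{E_1} ⊕ I_{E_2} → I_{P_1} ⊕ I_{P_2} → 0, with maps given by the matrices ((h^e_{11}, −h^e_{21}),(h^e_{12}, −h^e_{22})) and ((e_{11}, −e_{21}),(−e_{12}, e_{22})), is exact. -/

import Mathlib

open CategoryTheory CategoryTheory.Limits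

/-- The vertices of the quiver of the stratification `A₂` of the 2-sphere: two hemispheres
`H₁, H₂`, two half-equators `E₁, E₂`, two points `P₁, P₂`. -/
inductive V2 : Type
  | H1 | H2 | E1 | E2 | P1 | P2
  deriving DecidableEq

namespace V2

/-- dimension-like rank: points < equator arcs < hemispheres. -/
def rank : V2 → ℕ
  | H1 | H2 => 2
  | E1 | E2 => 1
  | P1 | P2 => 0

/-- In `A₂` there is an arrow `a → b` (i.e. `a ⊂ closure b`) iff `a = b` or `rank a < rank b`;
identifying all parallel paths, the category of representations of the quiver with relations
is the category of functors on this preorder. -/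
instance : Preorder V2 where
  le a b := a = b ∨ rank a < rank b
  le_refl a := Or.inl rfl
  le_trans a b c hab hbc := by
    rcases hab with rfl | hab
    · exact hbc
    · rcases hbc with rfl | hbc
      · exact Or.inr hab
      · exact Or.inr (hab.trans hbc)

instance : DecidableRel (α := V2) (· ≤ ·) := fun a b =>
  inferInstanceAs (Decidable (_ ∨ _))

end V2

variable (R : Type) [CommRing R]

/-- The category of representations of the quiver with relations of `A₂`
(= functors from the preorder `V2` to `R`-modules). -/
abbrev Rep2 := V2 ⥤ ModuleCat.{0} R

/-- The representation `I_v`: the extension by zero of the constant representation on the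
closure of the stratum `v`; it has stalk `R` at every vertex `x ≤ v` (identity arrows
among those) and `0` elsewhere. -/
def IRep (v : V2) : Rep2 R where
  obj x := ModuleCat.of R (PLift (x ≤ v) → R)
  map {x y} f := ModuleCat.ofHom
    { toFun := fun g h => g ⟨(leOfHom f).trans h.down⟩
      map_add' := fun _ _ => rfl
      map_smul' := fun _ _ => rfl }

/-- The constant representation `C` (stalk `R` everywhere, identity arrows). -/
def CRep : Rep2 R := (Functor.const V2).obj (ModuleCat.of R R)

/-- The canonical generator of `Hom(I_v, I_w)` for `w ≤ v` (identity on the common stalks,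
zero elsewhere). -/
def canMor {v w : V2} (h : w ≤ v) : IRep R v ⟶ IRep R w where
  app x := ModuleCat.ofHom
    { toFun := fun g hw => g ⟨hw.down.trans h⟩
      map_add' := fun _ _ => rfl
      map_smul' := fun _ _ => rfl }

/-- The canonical (adjunction) morphism `C ⟶ I_v`. -/
def unitMor (v : V2) : CRep R ⟶ IRep R v where
  app x := ModuleCat.ofHom
    { toFun := fun r _ => r
      map_add' := fun _ _ => rfl
      map_smul' := fun _ _ => rfl }

open V2

noncomputable section

/-- first differential `I_{H₁} ⊕ I_{H₂} ⟶ I_{E₁} ⊕ I_{E₂}`, given by the matrix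
`((h^e₁₁, −h^e₂₁), (h^e₁₂, −h^e₂₂))`. -/
def d2_0 : (IRep R H1 ⊞ IRep R H2) ⟶ (IRep R E1 ⊞ IRep R E2) :=
  biprod.lift
    (biprod.desc (canMor R (by decide : (E1 : V2) ≤ H1))
      (-(canMor R (by decide : (E1 : V2) ≤ H2))))
    (biprod.desc (canMor R (by decide : (E2 : V2) ≤ H1))
      (-(canMor R (by decide : (E2 : V2) ≤ H2))))

/-- second differential `I_{E₁} ⊕ I_{E₂} ⟶ I_{P₁} ⊕ I_{P₂}`, given by the matrix
`((e₁₁, −e₂₁), (−e₁₂, e₂₂))`. -/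
def d2_1 : (IRep R E1 ⊞ IRep R E2) ⟶ (IRep R P1 ⊞ IRep R P2) :=
  biprod.lift
    (biprod.desc (canMor R (by decide : (P1 : V2) ≤ E1))
      (-(canMor R (by decide : (P1 : V2) ≤ E2))))
    (biprod.desc (-(canMor R (by decide : (P2 : V2) ≤ E1)))
      (canMor R (by decide : (P2 : V2) ≤ E2)))

/-- The augmentation `C ⟶ I_{H₁} ⊕ I_{H₂}`. -/
def aug2 : CRep R ⟶ (IRep R H1 ⊞ IRep R H2) :=
  biprod.lift (unitMor R H1) (unitMor R H2)

section BPAux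
variable {R : Type} [CommRing R] {C : Type} [Category C] {A B S : C ⥤ ModuleCat.{0} R}

lemma bpTotal (x : C) (z : ((A ⊞ B) : C ⥤ ModuleCat.{0} R).obj x) :
    (biprod.inl : A ⟶ A ⊞ B).app x ((biprod.fst : A ⊞ B ⟶ A).app x z)
      + (biprod.inr : B ⟶ A ⊞ B).app x ((biprod.snd : A ⊞ B ⟶ B).app x z) = z := by
  have h := congrArg (fun (n : (A ⊞ B : C ⥤ ModuleCat.{0} R) ⟶ A ⊞ B) => n.app x z)
    (biprod.total (X := A) (Y := B))
  simp only [NatTrans.app_add, NatTrans.comp_app, NatTrans.id_app] at h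
  exact h

lemma bpExt {x : C} {z w : ((A ⊞ B) : C ⥤ ModuleCat.{0} R).obj x}
    (h1 : (biprod.fst : A ⊞ B ⟶ A).app x z = (biprod.fst : A ⊞ B ⟶ A).app x w)
    (h2 : (biprod.snd : A ⊞ B ⟶ B).app x z = (biprod.snd : A ⊞ B ⟶ B).app x w) :
    z = w := by
  rw [← bpTotal x z, ← bpTotal x w, h1, h2]

lemma bpFstLift (x : C) (f : S ⟶ A) (g : S ⟶ B) (z : S.obj x) :
    (biprod.fst : A ⊞ B ⟶ A).app x ((biprod.lift f g).app x z) = f.app x z := by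
  have h := congrArg (fun (n : S ⟶ A) => n.app x z) (biprod.lift_fst f g)
  simpa only [NatTrans.comp_app, ConcreteCategory.comp_apply, NatTrans.app_zero, ModuleCat.hom_zero, LinearMap.zero_apply] using h

lemma bpSndLift (x : C) (f : S ⟶ A) (g : S ⟶ B) (z : S.obj x) :
    (biprod.snd : A ⊞ B ⟶ B).app x ((biprod.lift f g).app x z) = g.app x z := by
  have h := congrArg (fun (n : S ⟶ B) => n.app x z) (biprod.lift_snd f g)
  simpa only [NatTrans.comp_app, ConcreteCategory.comp_apply, NatTrans.app_zero, ModuleCat.hom_zero, LinearMap.zero_apply] using h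

lemma bpInlDesc (x : C) (f : A ⟶ S) (g : B ⟶ S) (a : A.obj x) :
    (biprod.desc f g).app x ((biprod.inl : A ⟶ A ⊞ B).app x a) = f.app x a := by
  have h := congrArg (fun (n : A ⟶ S) => n.app x a) (biprod.inl_desc f g)
  simpa only [NatTrans.comp_app, ConcreteCategory.comp_apply, NatTrans.app_zero, ModuleCat.hom_zero, LinearMap.zero_apply] using h

lemma bpInrDesc (x : C) (f : A ⟶ S) (g : B ⟶ S) (b : B.obj x) :
    (biprod.desc f g).app x ((biprod.inr : B ⟶ A ⊞ B).app x b) = g.app x b := by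
  have h := congrArg (fun (n : B ⟶ S) => n.app x b) (biprod.inr_desc f g)
  simpa only [NatTrans.comp_app, ConcreteCategory.comp_apply, NatTrans.app_zero, ModuleCat.hom_zero, LinearMap.zero_apply] using h

lemma bpFstInl (x : C) (a : A.obj x) :
    (biprod.fst : A ⊞ B ⟶ A).app x ((biprod.inl : A ⟶ A ⊞ B).app x a) = a := by
  have h := congrArg (fun (n : A ⟶ A) => n.app x a) (biprod.inl_fst (X := A) (Y := B))
  simpa only [NatTrans.comp_app, NatTrans.id_app, ConcreteCategory.comp_apply, ConcreteCategory.id_apply] using h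

lemma bpSndInl (x : C) (a : A.obj x) :
    (biprod.snd : A ⊞ B ⟶ B).app x ((biprod.inl : A ⟶ A ⊞ B).app x a) = 0 := by
  have h := congrArg (fun (n : A ⟶ B) => n.app x a) (biprod.inl_snd (X := A) (Y := B))
  simpa only [NatTrans.comp_app, ConcreteCategory.comp_apply, NatTrans.app_zero, ModuleCat.hom_zero, LinearMap.zero_apply] using h

lemma bpFstInr (x : C) (b : B.obj x) :
    (biprod.fst : A ⊞ B ⟶ A).app x ((biprod.inr : B ⟶ A ⊞ B).app x b) = 0 := by
  have h := congrArg (fun (n : B ⟶ A) => n.app x b) (biprod.inr_fst (X := A) (Y := B))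
  simpa only [NatTrans.comp_app, ConcreteCategory.comp_apply, NatTrans.app_zero, ModuleCat.hom_zero, LinearMap.zero_apply] using h

lemma bpSndInr (x : C) (b : B.obj x) :
    (biprod.snd : A ⊞ B ⟶ B).app x ((biprod.inr : B ⟶ A ⊞ B).app x b) = b := by
  have h := congrArg (fun (n : B ⟶ B) => n.app x b) (biprod.inr_snd (X := A) (Y := B))
  simpa only [NatTrans.comp_app, NatTrans.id_app, ConcreteCategory.comp_apply, ConcreteCategory.id_apply] using h

lemma bpDescApp (x : C) (f : A ⟶ S) (g : B ⟶ S)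
    (z : ((A ⊞ B) : C ⥤ ModuleCat.{0} R).obj x) :
    (biprod.desc f g).app x z
      = f.app x ((biprod.fst : A ⊞ B ⟶ A).app x z)
        + g.app x ((biprod.snd : A ⊞ B ⟶ B).app x z) := by
  conv_lhs => rw [← bpTotal x z]
  rw [map_add, bpInlDesc, bpInrDesc]

lemma bpSS (x : C) [Subsingleton (A.obj x)] [Subsingleton (B.obj x)] :
    Subsingleton (((A ⊞ B) : C ⥤ ModuleCat.{0} R).obj x) :=
  ⟨fun _ _ => bpExt (Subsingleton.elim _ _) (Subsingleton.elim _ _)⟩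

end BPAux

section SpecAux
variable {R : Type} [CommRing R]

lemma irepSS (v x : V2) (h : ¬ x ≤ v) : Subsingleton ((IRep R v).obj x) :=
  ⟨fun a b => funext fun p => absurd p.down h⟩

lemma canMor_app {v w : V2} (h : w ≤ v) (x : V2) (g : (IRep R v).obj x)
    (p : PLift (x ≤ w)) : (canMor R h).app x g p = g ⟨p.down.trans h⟩ := by rfl

lemma unitMor_app (v x : V2) (r : R) (p : PLift (x ≤ v)) :
    (unitMor R v).app x r p = r := by rfl

lemma aug2_fst (x : V2) (r : R) :
    (biprod.fst : IRep R H1 ⊞ IRep R H2 ⟶ IRep R H1).app x ((aug2 R).app x r)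
      = fun _ => r :=
  (bpFstLift x (unitMor R H1) (unitMor R H2) r).trans (by rfl)

lemma aug2_snd (x : V2) (r : R) :
    (biprod.snd : IRep R H1 ⊞ IRep R H2 ⟶ IRep R H2).app x ((aug2 R).app x r)
      = fun _ => r :=
  (bpSndLift x (unitMor R H1) (unitMor R H2) r).trans (by rfl)

lemma d2_0_fst (x : V2) (z : ((IRep R H1 ⊞ IRep R H2) : Rep2 R).obj x)
    (p : PLift (x ≤ E1)) :
    (biprod.fst : IRep R E1 ⊞ IRep R E2 ⟶ IRep R E1).app x ((d2_0 R).app x z) p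
      = (biprod.fst : IRep R H1 ⊞ IRep R H2 ⟶ IRep R H1).app x z
          ⟨p.down.trans (by decide : (E1 : V2) ≤ H1)⟩
        - (biprod.snd : IRep R H1 ⊞ IRep R H2 ⟶ IRep R H2).app x z
          ⟨p.down.trans (by decide : (E1 : V2) ≤ H2)⟩ := by
  unfold d2_0
  rw [bpFstLift, bpDescApp]
  simp only [NatTrans.app_neg, sub_eq_add_neg, ModuleCat.hom_add, ModuleCat.hom_neg, LinearMap.add_apply, LinearMap.neg_apply, Pi.add_apply, Pi.neg_apply]
  rfl

lemma d2_0_snd (x : V2) (z : ((IRep R H1 ⊞ IRep R H2) : Rep2 R).obj x)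
    (p : PLift (x ≤ E2)) :
    (biprod.snd : IRep R E1 ⊞ IRep R E2 ⟶ IRep R E2).app x ((d2_0 R).app x z) p
      = (biprod.fst : IRep R H1 ⊞ IRep R H2 ⟶ IRep R H1).app x z
          ⟨p.down.trans (by decide : (E2 : V2) ≤ H1)⟩
        - (biprod.snd : IRep R H1 ⊞ IRep R H2 ⟶ IRep R H2).app x z
          ⟨p.down.trans (by decide : (E2 : V2) ≤ H2)⟩ := by
  unfold d2_0
  rw [bpSndLift, bpDescApp]
  simp only [NatTrans.app_neg, sub_eq_add_neg, ModuleCat.hom_add, ModuleCat.hom_neg, LinearMap.add_apply, LinearMap.neg_apply, Pi.add_apply, Pi.neg_apply]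
  rfl

lemma d2_1_fst (x : V2) (z : ((IRep R E1 ⊞ IRep R E2) : Rep2 R).obj x)
    (p : PLift (x ≤ P1)) :
    (biprod.fst : IRep R P1 ⊞ IRep R P2 ⟶ IRep R P1).app x ((d2_1 R).app x z) p
      = (biprod.fst : IRep R E1 ⊞ IRep R E2 ⟶ IRep R E1).app x z
          ⟨p.down.trans (by decide : (P1 : V2) ≤ E1)⟩
        - (biprod.snd : IRep R E1 ⊞ IRep R E2 ⟶ IRep R E2).app x z
          ⟨p.down.trans (by decide : (P1 : V2) ≤ E2)⟩ := by
  unfold d2_1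
  rw [bpFstLift, bpDescApp]
  simp only [NatTrans.app_neg, sub_eq_add_neg, ModuleCat.hom_add, ModuleCat.hom_neg, LinearMap.add_apply, LinearMap.neg_apply, Pi.add_apply, Pi.neg_apply]
  rfl

lemma d2_1_snd (x : V2) (z : ((IRep R E1 ⊞ IRep R E2) : Rep2 R).obj x)
    (p : PLift (x ≤ P2)) :
    (biprod.snd : IRep R P1 ⊞ IRep R P2 ⟶ IRep R P2).app x ((d2_1 R).app x z) p
      = - (biprod.fst : IRep R E1 ⊞ IRep R E2 ⟶ IRep R E1).app x z
          ⟨p.down.trans (by decide : (P2 : V2) ≤ E1)⟩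
        + (biprod.snd : IRep R E1 ⊞ IRep R E2 ⟶ IRep R E2).app x z
          ⟨p.down.trans (by decide : (P2 : V2) ≤ E2)⟩ := by
  unfold d2_1
  rw [bpSndLift, bpDescApp]
  simp only [NatTrans.app_neg, sub_eq_add_neg, ModuleCat.hom_add, ModuleCat.hom_neg, LinearMap.add_apply, LinearMap.neg_apply, Pi.add_apply, Pi.neg_apply]
  rfl

end SpecAux

section MoreAux
variable {R : Type} [CommRing R]

instance pliftSS {p : Prop} : Subsingleton (PLift p) :=
  ⟨fun ⟨_⟩ ⟨_⟩ => rfl⟩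

lemma irep_zero_apply (v x : V2) (p : PLift (x ≤ v)) :
    (0 : (IRep R v).obj x) p = 0 := rfl

end MoreAux


/-- For the quiver with relations of the stratification `A₂` of `S²`
(six vertices `H₁, H₂, E₁, E₂, P₁, P₂`, arrows `E_i → H_j` and `P_i → E_j`, all parallel
paths identified) and `R` a PID, the sequence
`0 → C → I_{H₁} ⊕ I_{H₂} → I_{E₁} ⊕ I_{E₂} → I_{P₁} ⊕ I_{P₂} → 0`
with the indicated matrices of canonical morphisms is exact (exactness being checked
stalkwise at each vertex). -/
theorem formality_spheres_stmt11 (R : Type) [CommRing R] [IsDomain R]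
    [IsPrincipalIdealRing R] :
    ∀ x : V2,
      Function.Injective ((aug2 R).app x) ∧
      Function.Exact ((aug2 R).app x) ((d2_0 R).app x) ∧
      Function.Exact ((d2_0 R).app x) ((d2_1 R).app x) ∧
      Function.Surjective ((d2_1 R).app x) := by
  intro x
  cases x with
  | H1 =>
    haveI := irepSS (R := R) H2 H1 (by decide)
    haveI := irepSS (R := R) E1 H1 (by decide)
    haveI := irepSS (R := R) E2 H1 (by decide)
    haveI := irepSS (R := R) P1 H1 (by decide)
    haveI := irepSS (R := R) P2 H1 (by decide)
    haveI : Subsingleton (((IRep R E1 ⊞ IRep R E2) : Rep2 R).obj H1) := bpSS H1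
    haveI : Subsingleton (((IRep R P1 ⊞ IRep R P2) : Rep2 R).obj H1) := bpSS H1
    refine ⟨?_, ?_, fun y => ⟨fun _ => ⟨0, Subsingleton.elim _ _⟩,
        fun _ => Subsingleton.elim _ _⟩, fun w => ⟨0, Subsingleton.elim _ _⟩⟩
    · intro r r' h
      have h2 := congrArg ((biprod.fst : IRep R H1 ⊞ IRep R H2 ⟶ IRep R H1).app H1) h
      erw [aug2_fst, aug2_fst] at h2
      exact congrFun h2 ⟨le_refl _⟩
    · intro y
      constructor
      · intro _
        refine ⟨(biprod.fst : IRep R H1 ⊞ IRep R H2 ⟶ IRep R H1).app H1 y ⟨le_refl _⟩,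
          bpExt ?_ (Subsingleton.elim _ _)⟩
        rw [aug2_fst]
        try exact funext fun p => congrArg _ (Subsingleton.elim _ p)
      · intro _
        exact Subsingleton.elim _ _
  | H2 =>
    haveI := irepSS (R := R) H1 H2 (by decide)
    haveI := irepSS (R := R) E1 H2 (by decide)
    haveI := irepSS (R := R) E2 H2 (by decide)
    haveI := irepSS (R := R) P1 H2 (by decide)
    haveI := irepSS (R := R) P2 H2 (by decide)
    haveI : Subsingleton (((IRep R E1 ⊞ IRep R E2) : Rep2 R).obj H2) := bpSS H2
    haveI : Subsingleton (((IRep R P1 ⊞ IRep R P2) : Rep2 R).obj H2) := bpSS H2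
    refine ⟨?_, ?_, fun y => ⟨fun _ => ⟨0, Subsingleton.elim _ _⟩,
        fun _ => Subsingleton.elim _ _⟩, fun w => ⟨0, Subsingleton.elim _ _⟩⟩
    · intro r r' h
      have h2 := congrArg ((biprod.snd : IRep R H1 ⊞ IRep R H2 ⟶ IRep R H2).app H2) h
      erw [aug2_snd, aug2_snd] at h2
      exact congrFun h2 ⟨le_refl _⟩
    · intro y
      constructor
      · intro _
        refine ⟨(biprod.snd : IRep R H1 ⊞ IRep R H2 ⟶ IRep R H2).app H2 y ⟨le_refl _⟩,
          bpExt (Subsingleton.elim _ _) ?_⟩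
        rw [aug2_snd]
        try exact funext fun p => congrArg _ (Subsingleton.elim _ p)
      · intro _
        exact Subsingleton.elim _ _
  | E1 =>
    haveI := irepSS (R := R) E2 E1 (by decide)
    haveI := irepSS (R := R) P1 E1 (by decide)
    haveI := irepSS (R := R) P2 E1 (by decide)
    haveI : Subsingleton (((IRep R P1 ⊞ IRep R P2) : Rep2 R).obj E1) := bpSS E1
    refine ⟨?_, ?_, ?_, fun w => ⟨0, Subsingleton.elim _ _⟩⟩
    · intro r r' h
      have h2 := congrArg ((biprod.fst : IRep R H1 ⊞ IRep R H2 ⟶ IRep R H1).app E1) h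
      erw [aug2_fst, aug2_fst] at h2
      exact congrFun h2 ⟨by decide⟩
    · intro y
      constructor
      · intro h0
        have hv := congrArg (fun w =>
          (biprod.fst : IRep R E1 ⊞ IRep R E2 ⟶ IRep R E1).app E1 w
            (⟨le_refl _⟩ : PLift ((E1 : V2) ≤ E1))) h0
        simp only at hv
        rw [map_zero, irep_zero_apply, d2_0_fst] at hv
        replace hv := sub_eq_zero.mp hv
        refine ⟨(biprod.fst : IRep R H1 ⊞ IRep R H2 ⟶ IRep R H1).app E1 y ⟨by decide⟩,
          bpExt ?_ ?_⟩
        · rw [aug2_fst]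
          try exact funext fun p => congrArg _ (Subsingleton.elim _ p)
        · rw [aug2_snd]
          try exact funext fun p => hv.trans (congrArg _ (Subsingleton.elim _ p))
      · rintro ⟨r, rfl⟩
        refine bpExt ?_ (Subsingleton.elim _ _)
        rw [map_zero]
        funext p
        erw [d2_0_fst, aug2_fst, aug2_snd]
        try exact sub_self r
    · intro y
      constructor
      · intro _
        refine ⟨(biprod.inl : IRep R H1 ⟶ IRep R H1 ⊞ IRep R H2).app E1
          (fun _ => (biprod.fst : IRep R E1 ⊞ IRep R E2 ⟶ IRep R E1).app E1 y ⟨le_refl _⟩),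
          bpExt ?_ (Subsingleton.elim _ _)⟩
        funext p
        erw [d2_0_fst, bpFstInl, bpSndInl]
        simp only [irep_zero_apply, sub_zero]
        try exact congrArg _ (Subsingleton.elim _ p)
      · intro _
        exact Subsingleton.elim _ _
  | E2 =>
    haveI := irepSS (R := R) E1 E2 (by decide)
    haveI := irepSS (R := R) P1 E2 (by decide)
    haveI := irepSS (R := R) P2 E2 (by decide)
    haveI : Subsingleton (((IRep R P1 ⊞ IRep R P2) : Rep2 R).obj E2) := bpSS E2
    refine ⟨?_, ?_, ?_, fun w => ⟨0, Subsingleton.elim _ _⟩⟩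
    · intro r r' h
      have h2 := congrArg ((biprod.fst : IRep R H1 ⊞ IRep R H2 ⟶ IRep R H1).app E2) h
      erw [aug2_fst, aug2_fst] at h2
      exact congrFun h2 ⟨by decide⟩
    · intro y
      constructor
      · intro h0
        have hv := congrArg (fun w =>
          (biprod.snd : IRep R E1 ⊞ IRep R E2 ⟶ IRep R E2).app E2 w
            (⟨le_refl _⟩ : PLift ((E2 : V2) ≤ E2))) h0
        simp only at hv
        rw [map_zero, irep_zero_apply, d2_0_snd] at hv
        replace hv := sub_eq_zero.mp hv
        refine ⟨(biprod.fst : IRep R H1 ⊞ IRep R H2 ⟶ IRep R H1).app E2 y ⟨by decide⟩,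
          bpExt ?_ ?_⟩
        · rw [aug2_fst]
          try exact funext fun p => congrArg _ (Subsingleton.elim _ p)
        · rw [aug2_snd]
          try exact funext fun p => hv.trans (congrArg _ (Subsingleton.elim _ p))
      · rintro ⟨r, rfl⟩
        refine bpExt (Subsingleton.elim _ _) ?_
        rw [map_zero]
        funext p
        erw [d2_0_snd, aug2_fst, aug2_snd]
        try exact sub_self r
    · intro y
      constructor
      · intro _
        refine ⟨(biprod.inl : IRep R H1 ⟶ IRep R H1 ⊞ IRep R H2).app E2
          (fun _ => (biprod.snd : IRep R E1 ⊞ IRep R E2 ⟶ IRep R E2).app E2 y ⟨le_refl _⟩),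
          bpExt (Subsingleton.elim _ _) ?_⟩
        funext p
        erw [d2_0_snd, bpFstInl, bpSndInl]
        simp only [irep_zero_apply, sub_zero]
        try exact congrArg _ (Subsingleton.elim _ p)
      · intro _
        exact Subsingleton.elim _ _
  | P1 =>
    haveI := irepSS (R := R) P2 P1 (by decide)
    refine ⟨?_, ?_, ?_, ?_⟩
    · intro r r' h
      have h2 := congrArg ((biprod.fst : IRep R H1 ⊞ IRep R H2 ⟶ IRep R H1).app P1) h
      erw [aug2_fst, aug2_fst] at h2
      exact congrFun h2 ⟨by decide⟩
    · intro y
      constructor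
      · intro h0
        have hv := congrArg (fun w =>
          (biprod.fst : IRep R E1 ⊞ IRep R E2 ⟶ IRep R E1).app P1 w
            (⟨by decide⟩ : PLift ((P1 : V2) ≤ E1))) h0
        simp only at hv
        rw [map_zero, irep_zero_apply, d2_0_fst] at hv
        replace hv := sub_eq_zero.mp hv
        refine ⟨(biprod.fst : IRep R H1 ⊞ IRep R H2 ⟶ IRep R H1).app P1 y ⟨by decide⟩,
          bpExt ?_ ?_⟩
        · rw [aug2_fst]
          try exact funext fun p => congrArg _ (Subsingleton.elim _ p)
        · rw [aug2_snd]
          try exact funext fun p => hv.trans (congrArg _ (Subsingleton.elim _ p))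
      · rintro ⟨r, rfl⟩
        refine bpExt ?_ ?_
        · rw [map_zero]
          funext p
          erw [d2_0_fst, aug2_fst, aug2_snd]
          try exact sub_self r
        · rw [map_zero]
          funext p
          erw [d2_0_snd, aug2_fst, aug2_snd]
          try exact sub_self r
    · intro y
      constructor
      · intro h0
        have hv := congrArg (fun w =>
          (biprod.fst : IRep R P1 ⊞ IRep R P2 ⟶ IRep R P1).app P1 w
            (⟨le_refl _⟩ : PLift ((P1 : V2) ≤ P1))) h0
        simp only at hv
        rw [map_zero, irep_zero_apply, d2_1_fst] at hv
        replace hv := sub_eq_zero.mp hv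
        refine ⟨(biprod.inl : IRep R H1 ⟶ IRep R H1 ⊞ IRep R H2).app P1
          (fun _ => (biprod.fst : IRep R E1 ⊞ IRep R E2 ⟶ IRep R E1).app P1 y ⟨by decide⟩),
          bpExt ?_ ?_⟩
        · funext p
          erw [d2_0_fst, bpFstInl, bpSndInl]
          simp only [irep_zero_apply, sub_zero]
          try exact congrArg _ (Subsingleton.elim _ p)
        · funext p
          erw [d2_0_snd, bpFstInl, bpSndInl]
          simp only [irep_zero_apply, sub_zero]
          try exact hv.trans (congrArg _ (Subsingleton.elim _ p))
      · rintro ⟨z, rfl⟩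
        refine bpExt ?_ (Subsingleton.elim _ _)
        rw [map_zero]
        funext p
        rw [d2_1_fst, d2_0_fst, d2_0_snd]
        try exact sub_self _
    · intro w
      refine ⟨(biprod.inl : IRep R E1 ⟶ IRep R E1 ⊞ IRep R E2).app P1
        (fun _ => (biprod.fst : IRep R P1 ⊞ IRep R P2 ⟶ IRep R P1).app P1 w ⟨le_refl _⟩),
        bpExt ?_ (Subsingleton.elim _ _)⟩
      funext p
      erw [d2_1_fst, bpFstInl, bpSndInl]
      simp only [irep_zero_apply, sub_zero]
      try exact congrArg _ (Subsingleton.elim _ p)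
  | P2 =>
    haveI := irepSS (R := R) P1 P2 (by decide)
    refine ⟨?_, ?_, ?_, ?_⟩
    · intro r r' h
      have h2 := congrArg ((biprod.fst : IRep R H1 ⊞ IRep R H2 ⟶ IRep R H1).app P2) h
      erw [aug2_fst, aug2_fst] at h2
      exact congrFun h2 ⟨by decide⟩
    · intro y
      constructor
      · intro h0
        have hv := congrArg (fun w =>
          (biprod.fst : IRep R E1 ⊞ IRep R E2 ⟶ IRep R E1).app P2 w
            (⟨by decide⟩ : PLift ((P2 : V2) ≤ E1))) h0
        simp only at hv
        rw [map_zero, irep_zero_apply, d2_0_fst] at hv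
        replace hv := sub_eq_zero.mp hv
        refine ⟨(biprod.fst : IRep R H1 ⊞ IRep R H2 ⟶ IRep R H1).app P2 y ⟨by decide⟩,
          bpExt ?_ ?_⟩
        · rw [aug2_fst]
          try exact funext fun p => congrArg _ (Subsingleton.elim _ p)
        · rw [aug2_snd]
          try exact funext fun p => hv.trans (congrArg _ (Subsingleton.elim _ p))
      · rintro ⟨r, rfl⟩
        refine bpExt ?_ ?_
        · rw [map_zero]
          funext p
          erw [d2_0_fst, aug2_fst, aug2_snd]
          try exact sub_self r
        · rw [map_zero]
          funext p
          erw [d2_0_snd, aug2_fst, aug2_snd]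
          try exact sub_self r
    · intro y
      constructor
      · intro h0
        have hv := congrArg (fun w =>
          (biprod.snd : IRep R P1 ⊞ IRep R P2 ⟶ IRep R P2).app P2 w
            (⟨le_refl _⟩ : PLift ((P2 : V2) ≤ P2))) h0
        simp only at hv
        rw [map_zero, irep_zero_apply, d2_1_snd] at hv
        replace hv := (neg_add_eq_zero.mp hv)
        refine ⟨(biprod.inl : IRep R H1 ⟶ IRep R H1 ⊞ IRep R H2).app P2
          (fun _ => (biprod.fst : IRep R E1 ⊞ IRep R E2 ⟶ IRep R E1).app P2 y ⟨by decide⟩),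
          bpExt ?_ ?_⟩
        · funext p
          erw [d2_0_fst, bpFstInl, bpSndInl]
          simp only [irep_zero_apply, sub_zero]
          try exact congrArg _ (Subsingleton.elim _ p)
        · funext p
          erw [d2_0_snd, bpFstInl, bpSndInl]
          simp only [irep_zero_apply, sub_zero]
          try exact hv.trans (congrArg _ (Subsingleton.elim _ p))
      · rintro ⟨z, rfl⟩
        refine bpExt (Subsingleton.elim _ _) ?_
        rw [map_zero]
        funext p
        rw [d2_1_snd, d2_0_fst, d2_0_snd]
        try exact neg_add_cancel _
    · intro w
      refine ⟨(biprod.inr : IRep R E2 ⟶ IRep R E1 ⊞ IRep R E2).app P2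
        (fun _ => (biprod.snd : IRep R P1 ⊞ IRep R P2 ⟶ IRep R P2).app P2 w ⟨le_refl _⟩),
        bpExt (Subsingleton.elim _ _) ?_⟩
      funext p
      erw [d2_1_snd, bpFstInr, bpSndInr]
      simp only [irep_zero_apply, neg_zero, zero_add]
      try exact congrArg _ (Subsingleton.elim _ p)

end
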